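/- Let (M_j(λ))_{j≥1} be 2×2 matrices of the form M_j(λ) = I + λ A_j with ‖A_j‖ ≤ δ_j, where ∑ δ_j^d < ∞ for some d ∈ (0,1). Then there is a constant K > 0 such that for all λ ∈ ℂ, ‖∏_{j=1}^{n} M_j(λ)‖ ≤ exp(K(1 + |λ|^d)) uniformly in n. -/

import Mathlib

set_option synthInstance.maxHeartbeats 1000000
set_option maxHeartbeats 1000000

/-- Operator norm (on `ℓ²`) of a 2×2 complex matrix. -/
noncomputable def opNormC (A : Matrix (Fin 2) (Fin 2) ℂ) : ℝ :=
  ‖Matrix.toEuclideanCLM (𝕜 := ℂ) (n := Fin 2) A‖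

lemma opNormC_nonneg (a : Matrix (Fin 2) (Fin 2) ℂ) : 0 ≤ opNormC a := norm_nonneg _

lemma opNormC_mul (a b : Matrix (Fin 2) (Fin 2) ℂ) :
    opNormC (a * b) ≤ opNormC a * opNormC b := by
  unfold opNormC; rw [map_mul]; exact norm_mul_le _ _

lemma opNormC_one : opNormC 1 = 1 := by
  unfold opNormC; rw [map_one]; exact norm_one

lemma opNormC_factor (z : ℂ) (a : Matrix (Fin 2) (Fin 2) ℂ) :
    opNormC (1 + z • a) ≤ 1 + ‖z‖ * opNormC a := by
  unfold opNormC
  rw [map_add, map_one, map_smul]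
  refine (norm_add_le _ _).trans ?_
  have h : ‖z • Matrix.toEuclideanCLM (𝕜 := ℂ) a‖ ≤ ‖z‖ * ‖Matrix.toEuclideanCLM (𝕜 := ℂ) a‖ :=
    ContinuousLinearMap.opNorm_smul_le z _
  simp only [norm_one] at *
  linarith

lemma one_add_le_exp_rpow {d : ℝ} (hd0 : 0 < d) (hd1 : d < 1) {x : ℝ} (hx : 0 ≤ x) :
    1 + x ≤ Real.exp ((1/d + Real.log 2) * x ^ d) := by
  have hC1 : (1:ℝ) ≤ 1/d + Real.log 2 := by
    have : (1:ℝ) ≤ 1/d := by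
      rw [le_div_iff₀ hd0]; linarith
    have h2 : (0:ℝ) ≤ Real.log 2 := Real.log_nonneg (by norm_num)
    linarith
  rcases eq_or_lt_of_le hx with h0 | h0
  · rw [← h0, Real.zero_rpow (ne_of_gt hd0)]
    simp
  rcases le_or_gt x 1 with h1 | h1
  · have hxd : x ≤ x ^ d := by
      nth_rewrite 1 [← Real.rpow_one x]
      exact Real.rpow_le_rpow_of_exponent_ge h0 h1 hd1.le
    have hxd0 : 0 ≤ x ^ d := Real.rpow_nonneg hx d
    calc 1 + x ≤ Real.exp x := by linarith [Real.add_one_le_exp x]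
      _ ≤ Real.exp ((1/d + Real.log 2) * x ^ d) := by
          apply Real.exp_le_exp.mpr
          nlinarith
  · have hx0 : (0:ℝ) < 1 + x := by linarith
    rw [← Real.exp_log hx0]
    apply Real.exp_le_exp.mpr
    have hxd1 : (1:ℝ) ≤ x ^ d := Real.one_le_rpow h1.le hd0.le
    have hlog : Real.log (1 + x) ≤ Real.log 2 + Real.log x := by
      rw [← Real.log_mul (by norm_num) (by linarith)]
      exact Real.log_le_log (by linarith) (by nlinarith)
    have hlogx : Real.log x ≤ (1/d) * x ^ d := by
      have := Real.log_le_sub_one_of_pos (Real.rpow_pos_of_pos h0 d)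
      rw [Real.log_rpow h0] at this
      have hd' : Real.log x ≤ (x ^ d - 1) / d := by
        rw [le_div_iff₀ hd0]; linarith [this]
      calc Real.log x ≤ (x ^ d - 1)/d := hd'
        _ ≤ x ^ d / d := by gcongr; linarith
        _ = (1/d) * x ^ d := by ring
    have h2 : Real.log 2 ≤ Real.log 2 * x ^ d :=
      le_mul_of_one_le_right (Real.log_nonneg (by norm_num)) hxd1
    nlinarith [hlog, hlogx, h2]

/-- If `M_j(λ) = I + λ A_j` with `‖A_j‖ ≤ δ_j` and `∑ δ_j^d < ∞` for some `d ∈ (0,1)`,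
then `‖∏_{j=1}^n M_j(λ)‖ ≤ exp (K (1 + |λ|^d))` uniformly in `n`, for some `K > 0`. -/
theorem prod_one_add_smul_norm_le (A : ℕ → Matrix (Fin 2) (Fin 2) ℂ) (δ : ℕ → ℝ)
    (hδpos : ∀ j, 1 ≤ j → 0 < δ j) (hA : ∀ j, 1 ≤ j → opNormC (A j) ≤ δ j)
    (d : ℝ) (hd0 : 0 < d) (hd1 : d < 1)
    (hsum : Summable fun j => δ (j + 1) ^ d) :
    ∃ K : ℝ, 0 < K ∧ ∀ (z : ℂ) (n : ℕ),
      opNormC (((List.range n).map fun j => (1 : Matrix (Fin 2) (Fin 2) ℂ) + z • A (j + 1))).prod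
        ≤ Real.exp (K * (1 + ‖z‖ ^ d)) := by
  set C : ℝ := 1/d + Real.log 2 with hCdef
  have hC0 : 0 < C := by
    have : (0:ℝ) < 1/d := by positivity
    have h2 : (0:ℝ) ≤ Real.log 2 := Real.log_nonneg (by norm_num)
    rw [hCdef]; linarith
  set S : ℝ := ∑' j, δ (j + 1) ^ d with hSdef
  have hS0 : 0 ≤ S := tsum_nonneg fun j => Real.rpow_nonneg (hδpos (j+1) (by omega)).le d
  refine ⟨C * (S + 1), by positivity, fun z n => ?_⟩
  have habs : 0 ≤ ‖z‖ := norm_nonneg _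
  -- step 1: induction bound
  have main : ∀ n : ℕ,
      opNormC (((List.range n).map fun j => (1 : Matrix (Fin 2) (Fin 2) ℂ) + z • A (j + 1))).prod
        ≤ Real.exp (∑ j ∈ Finset.range n, C * (‖z‖ * δ (j + 1)) ^ d) := by
    intro n
    induction n with
    | zero => simp [opNormC_one]
    | succ n ih =>
      rw [List.range_succ, List.map_append, List.prod_append]
      simp only [List.map_cons, List.map_nil, List.prod_cons, List.prod_nil, mul_one]
      have hfac : opNormC (1 + z • A (n + 1)) ≤
          Real.exp (C * (‖z‖ * δ (n + 1)) ^ d) := by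
        have h1 : opNormC (1 + z • A (n + 1)) ≤ 1 + ‖z‖ * δ (n + 1) := by
          refine (opNormC_factor z (A (n+1))).trans ?_
          have := hA (n+1) (by omega)
          nlinarith [opNormC_nonneg (A (n+1))]
        exact h1.trans (one_add_le_exp_rpow hd0 hd1
          (mul_nonneg habs (hδpos (n+1) (by omega)).le))
      refine (opNormC_mul _ _).trans ?_
      rw [Finset.sum_range_succ, Real.exp_add]
      exact mul_le_mul ih hfac (opNormC_nonneg _) (Real.exp_nonneg _)
  refine (main n).trans (Real.exp_le_exp.mpr ?_)
  have hzd : 0 ≤ ‖z‖ ^ d := Real.rpow_nonneg habs d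
  have hsum_eq : ∑ j ∈ Finset.range n, C * (‖z‖ * δ (j + 1)) ^ d
      = C * ‖z‖ ^ d * ∑ j ∈ Finset.range n, δ (j + 1) ^ d := by
    rw [Finset.mul_sum]
    refine Finset.sum_congr rfl fun j _ => ?_
    rw [Real.mul_rpow habs (hδpos (j+1) (by omega)).le]
    ring
  have hpart : ∑ j ∈ Finset.range n, δ (j + 1) ^ d ≤ S :=
    Summable.sum_le_tsum (Finset.range n)
      (fun i _ => Real.rpow_nonneg (hδpos (i+1) (by omega)).le d) hsum
  rw [hsum_eq]
  nlinarith [mul_le_mul_of_nonneg_left hpart (mul_nonneg hC0.le hzd)]
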